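/- Let λ(u) be the unique solution of Σ_i c_i² (λ − u_i)₊² = b with c_i ≥ 0 not all zero, b > 0. At a point u where λ(u) ≠ u_i for all i, λ is differentiable, and its partial derivatives are ∂λ/∂u_i = ω_i / Σ_j ω_j where ω_i := c_i²(λ(u) − u_i)₊. In particular each ∂λ/∂u_i ∈ [0,1], Σ_i ∂λ/∂u_i = 1, and ∂λ/∂u_i > 0 only if u_i < λ(u). -/

import Mathlib

/-- Differentiability of the fast-marching local update `lam` (the implicit
solution of `Σ_i (c i)^2 (lam v - v i)₊² = b`) at a point `u` where
`lam u ≠ u i` for all `i`: the derivative sends `du` to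
`(Σ_i ω_i * du_i) / (Σ_j ω_j)` with `ω_i = (c i)^2 (lam u - u i)₊`, each
partial derivative `ω_i / Σ_j ω_j` lies in `[0,1]`, they sum to `1`, and they
are positive only on indices with `u i < lam u`. -/
theorem fast_marching_local_update_derivative
    (n : ℕ) (c : Fin n → ℝ) (hc : ∀ i, 0 ≤ c i) (hne : ∃ i, c i ≠ 0)
    (b : ℝ) (hb : 0 < b) (lam : (Fin n → ℝ) → ℝ)
    (hlam : ∀ v : Fin n → ℝ, ∑ i, (c i)^2 * (max (lam v - v i) 0)^2 = b)
    (u : Fin n → ℝ) (hreg : ∀ i, lam u ≠ u i)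
    (w : Fin n → ℝ) (hw : ∀ i, w i = (c i)^2 * max (lam u - u i) 0) :
    (∃ L : (Fin n → ℝ) →L[ℝ] ℝ,
        (∀ du : Fin n → ℝ, L du = (∑ i, w i * du i) / (∑ j, w j)) ∧
        HasFDerivAt lam L u) ∧
    (∀ i, w i / (∑ j, w j) ∈ Set.Icc (0:ℝ) 1) ∧
    (∑ i, w i / (∑ j, w j)) = 1 ∧
    (∀ i, 0 < w i / (∑ j, w j) → u i < lam u) := by
  classical
  have hw0 : ∀ i, 0 ≤ w i := by
    intro i; rw [hw]
    exact mul_nonneg (sq_nonneg _) (le_max_right _ _)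
  -- there is a positive weight
  have hposterm : ∀ v : Fin n → ℝ, ∃ i, 0 < (c i)^2 * (max (lam v - v i) 0)^2 := by
    intro v
    by_contra h
    push_neg at h
    have hz : ∀ i, (c i)^2 * (max (lam v - v i) 0)^2 = 0 := fun i =>
      le_antisymm (h i) (mul_nonneg (sq_nonneg _) (sq_nonneg _))
    have : (0:ℝ) = b := by rw [← hlam v]; simp [hz]
    linarith
  have hpos : ∃ i, 0 < w i := by
    obtain ⟨i, hi⟩ := hposterm u
    refine ⟨i, ?_⟩
    rw [hw]
    rcases lt_or_ge 0 ((c i)^2 * max (lam u - u i) 0) with h | h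
    · exact h
    · exfalso
      have h1 : 0 ≤ (c i)^2 := sq_nonneg _
      have h2 : 0 ≤ max (lam u - u i) 0 := le_max_right _ _
      nlinarith
  set S : Finset (Fin n) := Finset.univ.filter (fun i => 0 < w i) with hS
  have hSmem : ∀ i, i ∈ S ↔ 0 < w i := by intro i; simp [hS]
  have hSne : S.Nonempty := by
    obtain ⟨i, hi⟩ := hpos; exact ⟨i, (hSmem i).2 hi⟩
  have hwS : ∀ i ∉ S, w i = 0 := by
    intro i hi
    have := (hSmem i).not.1 hi
    push_neg at this
    exact le_antisymm this (hw0 i)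
  have hcS : ∀ i ∈ S, 0 < (c i)^2 := by
    intro i hi
    have h := (hSmem i).1 hi
    rw [hw] at h
    rcases lt_or_ge 0 ((c i)^2) with h1 | h1
    · exact h1
    · exfalso
      have := le_max_right (lam u - u i) 0
      nlinarith
  have hmaxS : ∀ i ∈ S, max (lam u - u i) 0 = lam u - u i := by
    intro i hi
    have h := (hSmem i).1 hi
    rw [hw] at h
    have h2 : 0 < max (lam u - u i) 0 := by
      rcases lt_or_ge 0 (max (lam u - u i) 0) with h1 | h1
      · exact h1
      · exfalso; nlinarith [sq_nonneg (c i)]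
    rcases max_cases (lam u - u i) 0 with ⟨h3, _⟩ | ⟨h3, _⟩
    · exact h3
    · exfalso; rw [h3] at h2; exact lt_irrefl _ h2
  have huS : ∀ i ∈ S, u i < lam u := by
    intro i hi
    have := hmaxS i hi
    have h := (hSmem i).1 hi
    rw [hw, this] at h
    have := hcS i hi
    nlinarith
  have houtS : ∀ i ∉ S, c i ≠ 0 → lam u < u i := by
    intro i hi hci
    have hwi := hwS i hi
    rw [hw] at hwi
    have hc2 : (0:ℝ) < (c i)^2 := by positivity
    have hm : max (lam u - u i) 0 = 0 := by
      rcases mul_eq_zero.1 hwi with h | h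
      · exfalso; rw [h] at hc2; exact lt_irrefl _ hc2
      · exact h
    have : lam u - u i ≤ 0 := by
      by_contra h
      push_neg at h
      rw [max_eq_left h.le] at hm
      linarith
    have := hreg i
    rcases lt_or_eq_of_le ‹lam u - u i ≤ 0› with h | h
    · linarith
    · exfalso; exact this (by linarith)
  -- monotone / Lipschitz property
  have mono : ∀ v v' : Fin n → ℝ, ∀ t : ℝ, (∀ i, v i ≤ v' i + t) → lam v ≤ lam v' + t := by
    intro v v' t hle
    by_contra hgt
    push_neg at hgt
    have hterm : ∀ i ∈ Finset.univ, (c i)^2 * (max (lam v' - v' i) 0)^2 ≤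
        (c i)^2 * (max (lam v - v i) 0)^2 := by
      intro i _
      have h1 : lam v' - v' i ≤ lam v - v i := by have := hle i; linarith
      have h2 : max (lam v' - v' i) 0 ≤ max (lam v - v i) 0 := max_le_max h1 le_rfl
      have h3 : (max (lam v' - v' i) 0)^2 ≤ (max (lam v - v i) 0)^2 :=
        pow_le_pow_left₀ (le_max_right _ _) h2 2
      exact mul_le_mul_of_nonneg_left h3 (sq_nonneg _)
    obtain ⟨i0, hi0⟩ := hposterm v'
    have hm0 : 0 < max (lam v' - v' i0) 0 := by
      rcases lt_or_ge 0 (max (lam v' - v' i0) 0) with h1 | h1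
      · exact h1
      · exfalso
        have hm : max (lam v' - v' i0) 0 = 0 := le_antisymm h1 (le_max_right _ _)
        rw [hm] at hi0
        simp at hi0
    have hc0 : 0 < (c i0)^2 := by
      rcases lt_or_ge 0 ((c i0)^2) with h1 | h1
      · exact h1
      · exfalso; nlinarith [sq_nonneg (max (lam v' - v' i0) 0)]
    have hpv' : 0 < lam v' - v' i0 := by
      rcases max_cases (lam v' - v' i0) 0 with ⟨h3, _⟩ | ⟨h3, _⟩
      · rwa [h3] at hm0
      · exfalso; rw [h3] at hm0; exact lt_irrefl _ hm0
    have hstrict : (c i0)^2 * (max (lam v' - v' i0) 0)^2 <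
        (c i0)^2 * (max (lam v - v i0) 0)^2 := by
      have h1 : lam v' - v' i0 < lam v - v i0 := by have := hle i0; linarith
      have h2 : max (lam v' - v' i0) 0 < max (lam v - v i0) 0 := by
        rw [max_eq_left hpv'.le, max_eq_left (by linarith : (0:ℝ) ≤ lam v - v i0)]
        exact h1
      have h3 : (max (lam v' - v' i0) 0)^2 < (max (lam v - v i0) 0)^2 := by
        nlinarith [le_max_right (lam v' - v' i0) (0:ℝ)]
      exact mul_lt_mul_of_pos_left h3 hc0
    have : ∑ i, (c i)^2 * (max (lam v' - v' i) 0)^2 <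
        ∑ i, (c i)^2 * (max (lam v - v i) 0)^2 :=
      Finset.sum_lt_sum hterm ⟨i0, Finset.mem_univ i0, hstrict⟩
    rw [hlam v, hlam v'] at this
    exact lt_irrefl _ this
  have hlip : ∀ v : Fin n → ℝ, |lam v - lam u| ≤ dist v u := by
    intro v
    have h1 : ∀ i, v i ≤ u i + dist v u := by
      intro i
      have h := dist_le_pi_dist v u i
      rw [Real.dist_eq] at h
      have := (abs_le.1 h).2
      linarith
    have h2 : ∀ i, u i ≤ v i + dist v u := by
      intro i
      have h := dist_le_pi_dist v u i
      rw [Real.dist_eq] at h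
      have := (abs_le.1 h).1
      linarith
    have ha := mono v u (dist v u) h1
    have hb' := mono u v (dist v u) h2
    rw [abs_le]
    constructor <;> linarith
  -- the quantities in the explicit formula
  set A : ℝ := ∑ i ∈ S, (c i)^2 with hA
  have hApos : 0 < A := Finset.sum_pos (fun i hi => hcS i hi) hSne
  set Bf : (Fin n → ℝ) → ℝ := fun v => ∑ i ∈ S, (c i)^2 * v i with hBf
  set Cf : (Fin n → ℝ) → ℝ := fun v => ∑ i ∈ S, (c i)^2 * (v i * v i) with hCf
  set Df : (Fin n → ℝ) → ℝ := fun v => Bf v * Bf v - A * (Cf v - b) with hDf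
  set g : (Fin n → ℝ) → ℝ := fun v => A⁻¹ * (Bf v + Real.sqrt (Df v)) with hg
  have hWrepr : ∀ v : Fin n → ℝ, A * lam v - Bf v = ∑ i ∈ S, (c i)^2 * (lam v - v i) := by
    intro v
    rw [hA, hBf, Finset.sum_mul, ← Finset.sum_sub_distrib]
    exact Finset.sum_congr rfl fun i _ => (mul_sub _ _ _).symm
  -- key lemma: under sign conditions, sqrt(Df v) = A lam v - Bf v > 0 and g v = lam v
  have key : ∀ v : Fin n → ℝ, (∀ i ∈ S, v i < lam v) → (∀ i, i ∉ S → c i ≠ 0 → lam v ≤ v i) →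
      0 < A * lam v - Bf v ∧ Real.sqrt (Df v) = A * lam v - Bf v ∧ g v = lam v := by
    intro v hin hout
    have hsum : ∑ i ∈ S, (c i)^2 * (lam v - v i)^2 = b := by
      rw [← hlam v]
      rw [← Finset.sum_subset (Finset.subset_univ S) (fun i _ hi => ?_)]
      · exact Finset.sum_congr rfl (fun i hi => by
          rw [max_eq_left (le_of_lt (sub_pos.2 (hin i hi)))])
      · by_cases hci : c i = 0
        · simp [hci]
        · have h1 := hout i hi hci
          have h2 : max (lam v - v i) 0 = 0 := max_eq_right (by linarith)
          simp [h2]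
    have hWpos : 0 < A * lam v - Bf v := by
      rw [hWrepr v]
      exact Finset.sum_pos (fun i hi =>
        mul_pos (hcS i hi) (sub_pos.2 (hin i hi))) hSne
    have hquad : A * (lam v)^2 - 2 * lam v * Bf v + Cf v = b := by
      have hBv : Bf v = ∑ i ∈ S, (c i)^2 * v i := rfl
      have hCv : Cf v = ∑ i ∈ S, (c i)^2 * (v i * v i) := rfl
      rw [← hsum, hA, hBv, hCv, Finset.sum_mul, Finset.mul_sum,
        ← Finset.sum_sub_distrib, ← Finset.sum_add_distrib]
      exact Finset.sum_congr rfl fun i _ => by ring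
    have hDval : Df v = (A * lam v - Bf v)^2 := by
      rw [hDf]
      linear_combination (-A) * hquad
    have hsq : Real.sqrt (Df v) = A * lam v - Bf v := by
      rw [hDval, Real.sqrt_sq hWpos.le]
    refine ⟨hWpos, hsq, ?_⟩
    have hgv : g v = A⁻¹ * (Bf v + Real.sqrt (Df v)) := rfl
    rw [hgv, hsq, show Bf v + (A * lam v - Bf v) = A * lam v by ring,
      inv_mul_cancel_left₀ hApos.ne']
  -- at u
  obtain ⟨hWu, hsqu, hgu⟩ := key u huS (fun i hi hci => (houtS i hi hci).le)
  have hWsum : ∑ j, w j = A * lam u - Bf u := by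
    rw [hWrepr u]
    rw [← Finset.sum_subset (Finset.subset_univ S) (fun i _ hi => hwS i hi)]
    exact Finset.sum_congr rfl fun i hi => by rw [hw, hmaxS i hi]
  have hWsumpos : 0 < ∑ j, w j := by rw [hWsum]; exact hWu
  have hDune : Df u ≠ 0 := by
    intro h
    rw [h, Real.sqrt_zero] at hsqu
    linarith
  -- eventual equality lam = g near u
  have hεne : (Finset.univ : Finset (Fin n)).Nonempty := ⟨hSne.choose, Finset.mem_univ _⟩
  set ε : ℝ := (Finset.univ.inf' hεne fun i => |lam u - u i|) / 2 with hε
  have hεpos : 0 < ε := by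
    rw [hε]
    have : 0 < Finset.univ.inf' hεne fun i => |lam u - u i| := by
      rw [Finset.lt_inf'_iff]
      intro i _
      exact abs_pos.2 (sub_ne_zero.2 (hreg i))
    linarith
  have hinf_le : ∀ i, 2 * ε ≤ |lam u - u i| := by
    intro i
    have := Finset.inf'_le (fun i => |lam u - u i|) (Finset.mem_univ i)
    rw [hε] at *
    linarith [this]
  have hev : lam =ᶠ[nhds u] g := by
    filter_upwards [Metric.ball_mem_nhds u hεpos] with v hv
    have hd : dist v u < ε := by rwa [Metric.mem_ball] at hv
    have hcoord : ∀ i, |v i - u i| ≤ dist v u := by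
      intro i
      have := dist_le_pi_dist v u i
      rwa [Real.dist_eq] at this
    have hlc : |lam v - lam u| ≤ dist v u := hlip v
    have hin : ∀ i ∈ S, v i < lam v := by
      intro i hi
      have h1 := huS i hi
      have h2 : 2 * ε ≤ lam u - u i := by
        have := hinf_le i
        rw [abs_of_pos (sub_pos.2 h1)] at this
        linarith
      have h3 := (abs_le.1 (hcoord i)).2
      have h4 := (abs_le.1 hlc).1
      linarith
    have hout : ∀ i, i ∉ S → c i ≠ 0 → lam v ≤ v i := by
      intro i hi hci
      have h1 := houtS i hi hci
      have h2 : lam u - u i ≤ -(2 * ε) := by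
        have := hinf_le i
        rw [abs_of_neg (sub_neg.2 h1)] at this
        linarith
      have h3 := (abs_le.1 (hcoord i)).1
      have h4 := (abs_le.1 hlc).2
      linarith
    exact ((key v hin hout).2.2).symm
  -- derivative of g
  have hB' : HasFDerivAt Bf
      (∑ i ∈ S, (c i)^2 • (ContinuousLinearMap.proj i : (Fin n → ℝ) →L[ℝ] ℝ)) u := by
    rw [hBf]
    refine HasFDerivAt.fun_sum fun i _ => ?_
    exact ((ContinuousLinearMap.proj i : (Fin n → ℝ) →L[ℝ] ℝ)).hasFDerivAt.const_mul ((c i)^2)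
  set LB : (Fin n → ℝ) →L[ℝ] ℝ :=
    ∑ i ∈ S, (c i)^2 • (ContinuousLinearMap.proj i : (Fin n → ℝ) →L[ℝ] ℝ) with hLB
  set LC : (Fin n → ℝ) →L[ℝ] ℝ :=
    ∑ i ∈ S, ((c i)^2 * (2 * u i)) • (ContinuousLinearMap.proj i : (Fin n → ℝ) →L[ℝ] ℝ) with hLC
  have hC' : HasFDerivAt Cf LC u := by
    rw [hCf, hLC]
    refine HasFDerivAt.fun_sum fun i _ => ?_
    have hp := ((ContinuousLinearMap.proj i : (Fin n → ℝ) →L[ℝ] ℝ)).hasFDerivAt (x := u)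
    have h1 := (hp.fun_mul hp).const_mul ((c i)^2)
    refine h1.congr_fderiv ?_
    ext du
    simp [ContinuousLinearMap.smul_apply, ContinuousLinearMap.proj_apply,
      ContinuousLinearMap.add_apply, smul_eq_mul]
    ring
  set LD : (Fin n → ℝ) →L[ℝ] ℝ := (2 * Bf u) • LB - A • LC with hLD
  have hD' : HasFDerivAt Df LD u := by
    rw [hDf, hLD]
    have h1 := hB'.fun_mul hB'
    have h2 := (hC'.sub_const b).const_mul A
    have h3 := h1.fun_sub h2
    refine h3.congr_fderiv ?_
    ext du
    simp [ContinuousLinearMap.smul_apply, ContinuousLinearMap.add_apply,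
      ContinuousLinearMap.sub_apply, smul_eq_mul]
    ring
  have hsqrt' : HasFDerivAt (fun v => Real.sqrt (Df v))
      ((1 / (2 * Real.sqrt (Df u))) • LD) u :=
    (Real.hasDerivAt_sqrt hDune).comp_hasFDerivAt u hD'
  have hg' : HasFDerivAt g (A⁻¹ • (LB + (1 / (2 * Real.sqrt (Df u))) • LD)) u :=
    (hB'.add hsqrt').const_mul A⁻¹
  set L : (Fin n → ℝ) →L[ℝ] ℝ := A⁻¹ • (LB + (1 / (2 * Real.sqrt (Df u))) • LD) with hL
  have hlamderiv : HasFDerivAt lam L u := hg'.congr_of_eventuallyEq hev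
  -- formula for L
  have hLform : ∀ du : Fin n → ℝ, L du = (∑ i, w i * du i) / (∑ j, w j) := by
    intro du
    have hLBdu : LB du = ∑ i ∈ S, (c i)^2 * du i := by
      rw [hLB]
      simp [ContinuousLinearMap.sum_apply, ContinuousLinearMap.smul_apply,
        ContinuousLinearMap.proj_apply, smul_eq_mul]
    have hLCdu : LC du = ∑ i ∈ S, (c i)^2 * (2 * u i) * du i := by
      rw [hLC]
      simp [ContinuousLinearMap.sum_apply, ContinuousLinearMap.smul_apply,
        ContinuousLinearMap.proj_apply, smul_eq_mul]
    have hnum : ∑ i, w i * du i =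
        lam u * (∑ i ∈ S, (c i)^2 * du i) - ∑ i ∈ S, (c i)^2 * (u i) * du i := by
      rw [← Finset.sum_subset (Finset.subset_univ S)
        (fun i _ hi => by rw [hwS i hi, zero_mul])]
      rw [Finset.mul_sum, ← Finset.sum_sub_distrib]
      refine Finset.sum_congr rfl fun i hi => ?_
      rw [hw, hmaxS i hi]
      ring
    have hLdu : L du = A⁻¹ * (LB du + (1 / (2 * Real.sqrt (Df u))) * LD du) := by
      rw [hL]
      simp [ContinuousLinearMap.smul_apply, ContinuousLinearMap.add_apply, smul_eq_mul]
      ring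
    have hLDdu : LD du = 2 * Bf u * LB du - A * LC du := by
      rw [hLD]
      simp [ContinuousLinearMap.smul_apply, ContinuousLinearMap.sub_apply, smul_eq_mul]
    rw [hLdu, hLDdu, hsqu, hLBdu, hLCdu, hnum, hWsum]
    set p := ∑ i ∈ S, (c i)^2 * du i
    have hq : ∑ i ∈ S, (c i)^2 * (2 * u i) * du i
        = 2 * ∑ i ∈ S, (c i)^2 * (u i) * du i := by
      rw [Finset.mul_sum]
      exact Finset.sum_congr rfl fun i _ => by ring
    rw [hq]
    set q := ∑ i ∈ S, (c i)^2 * (u i) * du i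
    have hAne : A ≠ 0 := ne_of_gt hApos
    have hWne : A * lam u - Bf u ≠ 0 := ne_of_gt hWu
    field_simp
    ring
  refine ⟨⟨L, hLform, hlamderiv⟩, ?_, ?_, ?_⟩
  · intro i
    constructor
    · exact div_nonneg (hw0 i) hWsumpos.le
    · rw [div_le_one hWsumpos]
      exact Finset.single_le_sum (fun j _ => hw0 j) (Finset.mem_univ i)
  · rw [← Finset.sum_div, div_self (ne_of_gt hWsumpos)]
  · intro i hi
    have hwi : 0 < w i := by
      by_contra h
      push_neg at h
      have : w i = 0 := le_antisymm h (hw0 i)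
      rw [this, zero_div] at hi
      exact lt_irrefl _ hi
    exact huS i ((hSmem i).2 hwi)
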